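/- arXiv:1904.03071 — 2 statements merged into one kernel-verified Lean document; each statement's English description precedes it below -/
import Mathlib

section
/- Let A be a small preadditive category, let G = {G_a : a ∈ Ob(A)} be a linear Grothendieck topology on A, and set T^G := Gen{H_a/R : a ∈ Ob(A), R ∈ G_a} ⊆ Mod A. Then: (1) a right A-module T belongs to T^G if and only if Ker(φ) ∈ G_a for every a ∈ Ob(A) and every morphism φ : H_a → T; (2) T^G is a hereditary torsion class in Mod A. -/
open CategoryTheory CategoryTheory.Limits Opposite
noncomputable section
universe u
section general
variable {C : Type u} [Category.{v} C]

lemma factors_intro {X Y : C} (P : Subobject Y) (h : X ⟶ (P : C)) (f : X ⟶ Y)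
    (w : h ≫ P.arrow = f) : P.Factors f :=
  (Subobject.factors_iff _ _).mpr ⟨h, w⟩

lemma le_of_factors {Y : C} (P Q : Subobject Y) (h : Q.Factors P.arrow) : P ≤ Q :=
  Subobject.le_of_comm (Q.factorThru _ h) (Subobject.factorThru_arrow _ _ h)

lemma le_iff_factors {Y : C} (P Q : Subobject Y) : P ≤ Q ↔ Q.Factors P.arrow :=
  ⟨fun h => factors_intro _ (Subobject.ofLE _ _ h) _ (Subobject.ofLE_arrow h),
   le_of_factors P Q⟩

lemma eq_of_factors_iff {Y : C} (P Q : Subobject Y)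
    (h : ∀ ⦃X : C⦄ (f : X ⟶ Y), P.Factors f ↔ Q.Factors f) : P = Q :=
  le_antisymm (le_of_factors _ _ ((h _).1 (Subobject.factors_self P)))
    (le_of_factors _ _ ((h _).2 (Subobject.factors_self Q)))

lemma factors_comp_left {X X' Y : C} (P : Subobject Y) {f : X ⟶ Y} (g : X' ⟶ X)
    (h : P.Factors f) : P.Factors (g ≫ f) :=
  factors_intro _ (g ≫ P.factorThru f h) _ (by simp)

variable [HasPullbacks C]

lemma pullback_obj_mk {W X Y : C} (r : W ⟶ Y) [Mono r] (f : X ⟶ Y) :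
    (Subobject.pullback f).obj (Subobject.mk r) = Subobject.mk (pullback.snd r f) := by
  exact Quotient.sound ⟨MonoOver.isoMk (Iso.refl _) (by simp [MonoOver.pullback_obj_arrow])⟩

lemma pullback_factors_iff {W X Y : C} (f : X ⟶ Y) (R : Subobject Y) (g : W ⟶ X) :
    ((Subobject.pullback f).obj R).Factors g ↔ R.Factors (g ≫ f) := by
  conv_lhs => rw [← Subobject.mk_arrow R]
  rw [pullback_obj_mk]
  constructor
  · intro h
    refine factors_intro _
      ((Subobject.mk (pullback.snd R.arrow f)).factorThru g h ≫
        (Subobject.underlyingIso _).hom ≫ pullback.fst _ _) _ ?_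
    simp only [Category.assoc, pullback.condition]
    rw [← Category.assoc ((Subobject.underlyingIso _).hom),
      Subobject.underlyingIso_hom_comp_eq_mk, ← Category.assoc,
      Subobject.factorThru_arrow]
  · intro h
    refine factors_intro _
      (pullback.lift (R.factorThru _ h) g (by simp) ≫ (Subobject.underlyingIso _).inv) _ ?_
    rw [Category.assoc, Subobject.underlyingIso_arrow, pullback.lift_snd]
end general
section general2
variable {C : Type u} [Category.{v} C] [HasPullbacks C]

lemma pullback_inf {X Y : C} (f : X ⟶ Y) (R S : Subobject Y) :
    (Subobject.pullback f).obj (R ⊓ S) =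
      (Subobject.pullback f).obj R ⊓ (Subobject.pullback f).obj S := by
  refine eq_of_factors_iff _ _ fun W g => ?_
  rw [_root_.pullback_factors_iff, Subobject.inf_factors, Subobject.inf_factors,
    _root_.pullback_factors_iff, _root_.pullback_factors_iff]

lemma pullback_eq_top {X Y : C} (f : X ⟶ Y) (R : Subobject Y) (h : R.Factors f) :
    (Subobject.pullback f).obj R = ⊤ := by
  refine le_antisymm le_top (le_of_factors _ _ ?_)
  rw [_root_.pullback_factors_iff]
  exact factors_comp_left _ _ h

lemma pullback_kernel [Abelian C] {X Y Z : C} (f : X ⟶ Y) (χ : Y ⟶ Z) :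
    (Subobject.pullback f).obj (kernelSubobject χ) = kernelSubobject (f ≫ χ) := by
  refine eq_of_factors_iff _ _ fun W g => ?_
  rw [_root_.pullback_factors_iff, kernelSubobject_factors_iff, kernelSubobject_factors_iff,
    Category.assoc]

lemma kernel_cokernel_pi [Abelian C] {Y : C} (R : Subobject Y) :
    kernelSubobject (cokernel.π R.arrow) = R := by
  refine le_antisymm (le_of_factors _ _ ?_) (le_of_factors _ _ ?_)
  · exact factors_intro _ (Abelian.monoLift R.arrow _ (kernelSubobject_arrow_comp _)) _
      (Abelian.monoLift_comp _ _ _)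
  · exact kernelSubobject_factors _ _ (cokernel.condition R.arrow)

lemma kernel_comp_mono [Abelian C] {X Y Z : C} (φ : X ⟶ Y) (h : Y ⟶ Z) [Mono h] :
    kernelSubobject (φ ≫ h) = kernelSubobject φ :=
  kernelSubobject_comp_mono φ h

lemma kernel_zero_eq_top [Abelian C] {X Y : C} :
    kernelSubobject (0 : X ⟶ Y) = ⊤ :=
  le_antisymm le_top (le_of_factors _ _ (kernelSubobject_factors _ _ (by simp)))
end general2

section general3
variable {C : Type u} [Category.{v} C] [Abelian C]

lemma comp_eq_zero_of_le_kernel {Y Z : C} {K : Subobject Y} {φ : Y ⟶ Z}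
    (h : K ≤ kernelSubobject φ) : K.arrow ≫ φ = 0 := by
  rw [le_iff_factors] at h
  rw [← Subobject.factorThru_arrow _ _ h, Category.assoc, kernelSubobject_arrow_comp,
    Limits.comp_zero]

lemma kernel_inf_le_add {Y Z : C} (φ ψ : Y ⟶ Z) :
    kernelSubobject φ ⊓ kernelSubobject ψ ≤ kernelSubobject (φ + ψ) := by
  refine le_of_factors _ _ (kernelSubobject_factors _ _ ?_)
  rw [Preadditive.comp_add,
    comp_eq_zero_of_le_kernel
      (inf_le_left : kernelSubobject φ ⊓ kernelSubobject ψ ≤ kernelSubobject φ),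
    comp_eq_zero_of_le_kernel
      (inf_le_right : kernelSubobject φ ⊓ kernelSubobject ψ ≤ kernelSubobject ψ), add_zero]

lemma kernel_congr {Y Z : C} {f g : Y ⟶ Z} (h : f = g) :
    kernelSubobject f = kernelSubobject g := by subst h; rfl

lemma kernel_neg_eq {Y Z : C} (φ : Y ⟶ Z) :
    kernelSubobject (-φ) = kernelSubobject φ := by
  refine eq_of_factors_iff _ _ fun W g => ?_
  rw [kernelSubobject_factors_iff, kernelSubobject_factors_iff, Preadditive.comp_neg,
    neg_eq_zero]
end general3

end

noncomputable section
universe u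
variable (A : Type u) [SmallCategory A] [Preadditive A]

abbrev PMod := Aᵒᵖ ⥤ AddCommGrpCat.{u}

def Hrep (b : A) : PMod A where
  obj a := AddCommGrpCat.of (unop a ⟶ b)
  map f := AddCommGrpCat.ofHom (AddMonoidHom.mk' (fun g => f.unop ≫ g)
    (fun g h => Preadditive.comp_add _ _ _ _ _ _))
  map_id a := by ext g; simp
  map_comp f g := by
    ext h
    show (f ≫ g).unop ≫ h = g.unop ≫ f.unop ≫ h
    simp

def toH {a b : A} (γ : a ⟶ b) : ((Hrep A b).obj (op a)) := γ

def Hmap {b b' : A} (r : b ⟶ b') : Hrep A b ⟶ Hrep A b' where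
  app a := AddCommGrpCat.ofHom (AddMonoidHom.mk' (fun g => g ≫ r)
    (fun g h => Preadditive.add_comp _ _ _ _ _ _))
  naturality a a' f := by
    ext g
    show (f.unop ≫ g) ≫ r = f.unop ≫ g ≫ r
    exact Category.assoc _ _ _

def inSub {M : PMod A} (R : Subobject M) {a : A} (x : M.obj (op a)) : Prop :=
  ∃ y, R.arrow.app (op a) y = x


/-- A (linear) Grothendieck topology on `A`. -/
structure LinearGT : Type (u + 1) where
  sieves : ∀ a : A, Set (Subobject (Hrep A a))
  id_mem : ∀ a : A, ⊤ ∈ sieves a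
  pullback_mem : ∀ {a a' : A} (r : a' ⟶ a) (R : Subobject (Hrep A a)),
    R ∈ sieves a → (Subobject.pullback (Hmap A r)).obj R ∈ sieves a'
  glue : ∀ {a : A} (R S : Subobject (Hrep A a)), S ∈ sieves a →
    (∀ (a' : A) (r : a' ⟶ a), inSub A S (toH A r) →
      (Subobject.pullback (Hmap A r)).obj R ∈ sieves a') →
    R ∈ sieves a

def Gen (S : Set (PMod A)) : Set (PMod A) :=
  {M | ∃ (ι : Type u) (g : ι → PMod A), (∀ i, g i ∈ S) ∧ ∃ p : (∐ g) ⟶ M, Epi p}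

def TG (G : LinearGT A) : Set (PMod A) :=
  Gen A {M | ∃ (a : A) (R : Subobject (Hrep A a)), R ∈ G.sieves a ∧
    Nonempty (M ≅ cokernel R.arrow)}

/-- A hereditary torsion class: closed under quotients, extensions, coproducts and
submodules. -/
def IsHereditaryTorsionClass' (T : Set (PMod A)) : Prop :=
  (∀ (X Q : PMod A) (p : X ⟶ Q), Epi p → X ∈ T → Q ∈ T) ∧
  (∀ X : PMod A, X.Additive → ∀ (Q : PMod A) (p : X ⟶ Q), Epi p → Q ∈ T →
    kernel p ∈ T → X ∈ T) ∧
  (∀ (ι : Type u) (g : ι → PMod A), (∀ i, g i ∈ T) → (∐ g) ∈ T) ∧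
  (∀ (S X : PMod A) (f : S ⟶ X), Mono f → X ∈ T → S ∈ T)

section infra
variable {A}

/-- The element of `Hom(b,a)` viewed in `(Hrep A a).obj (op b)`. -/
lemma hrep_map_apply {a : A} {b b' : Aᵒᵖ} (f : b ⟶ b') (s : (Hrep A a).obj b) :
    (Hrep A a).map f s = f.unop ≫ s := rfl

instance hrep_additive (a : A) : (Hrep A a).Additive where
  map_add {X Y f g} := by
    ext h
    show (f + g).unop ≫ h = f.unop ≫ h + g.unop ≫ h
    exact Preadditive.add_comp _ _ _ _ _ _

/-- The natural transformation `Hrep a ⟶ M` associated to an element `x : M(a)`,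
for `M` additive. -/
def elt {M : PMod A} [M.Additive] {a : A} (x : M.obj (op a)) : Hrep A a ⟶ M where
  app b := AddCommGrpCat.ofHom (AddMonoidHom.mk' (fun s : (unop b ⟶ a) => M.map s.op x)
    (fun s t => by
      show M.map (s + t).op x = M.map s.op x + M.map t.op x
      rw [op_add, M.map_add]; rfl))
  naturality b b' f := by
    ext (s : (unop b ⟶ a))
    show M.map (f.unop ≫ s).op x = M.map f (M.map s.op x)
    rw [op_comp, M.map_comp]
    rfl

@[simp] lemma elt_app {M : PMod A} [M.Additive] {a : A} (x : M.obj (op a)) {b : Aᵒᵖ}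
    (s : (Hrep A a).obj b) : (elt x).app b s = M.map (s : unop b ⟶ a).op x := rfl

lemma hom_app_eq {T : PMod A} {a : A} (φ : Hrep A a ⟶ T) {b : Aᵒᵖ}
    (s : (Hrep A a).obj b) :
    φ.app b s = T.map (s : unop b ⟶ a).op (φ.app (op a) (toH A (𝟙 a))) := by
  have h := ConcreteCategory.congr_hom (φ.naturality (s : unop b ⟶ a).op) (toH A (𝟙 a))
  have h2 : φ.app b ((s : unop b ⟶ a) ≫ 𝟙 a) =
      T.map (s : unop b ⟶ a).op (φ.app (op a) (toH A (𝟙 a))) := h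
  exact (congrArg (fun t : (Hrep A a).obj b => φ.app b t)
    (Category.comp_id (s : unop b ⟶ a))).symm.trans h2

lemma eq_elt {T : PMod A} [T.Additive] {a : A} (φ : Hrep A a ⟶ T) :
    φ = elt (φ.app (op a) (toH A (𝟙 a))) := by
  ext b s
  rw [hom_app_eq φ s]
  rfl

lemma additive_of_epi {M T : PMod A} [M.Additive] (p : M ⟶ T) [Epi p] : T.Additive where
  map_add {X Y f g} := by
    ext x
    obtain ⟨y, rfl⟩ := (AddCommGrpCat.epi_iff_surjective (p.app X)).1 inferInstance x
    have h1 : p.app Y (M.map (f + g) y) = T.map (f + g) (p.app X y) :=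
      ConcreteCategory.congr_hom (p.naturality (f + g)) y
    have h2 : p.app Y (M.map f y) = T.map f (p.app X y) :=
      ConcreteCategory.congr_hom (p.naturality f) y
    have h3 : p.app Y (M.map g y) = T.map g (p.app X y) :=
      ConcreteCategory.congr_hom (p.naturality g) y
    show T.map (f + g) (p.app X y) = T.map f (p.app X y) + T.map g (p.app X y)
    rw [← h1, ← h2, ← h3, M.map_add]
    show p.app Y (M.map f y + M.map g y) = _
    rw [map_add]

lemma additive_of_mono {M T : PMod A} [T.Additive] (i : M ⟶ T) [Mono i] : M.Additive where
  map_add {X Y f g} := by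
    ext x
    apply (AddCommGrpCat.mono_iff_injective (i.app Y)).1 inferInstance
    have h1 : i.app Y (M.map (f + g) x) = T.map (f + g) (i.app X x) :=
      ConcreteCategory.congr_hom (i.naturality (f + g)) x
    have h2 : i.app Y (M.map f x) = T.map f (i.app X x) :=
      ConcreteCategory.congr_hom (i.naturality f) x
    have h3 : i.app Y (M.map g x) = T.map g (i.app X x) :=
      ConcreteCategory.congr_hom (i.naturality g) x
    show i.app Y (M.map (f+g) x) = i.app Y ((M.map f + M.map g) x)
    rw [h1, T.map_add]
    show T.map f (i.app X x) + T.map g (i.app X x) = _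
    have : (M.map f + M.map g) x = M.map f x + M.map g x := rfl
    rw [this, map_add, h2, h3]
lemma jg {ι : Type u} (g : ι → PMod A) (b : Aᵒᵖ) :
    (⨆ i, AddMonoidHom.range ((Sigma.ι g i).app b).hom) = ⊤ := by
  set N := ⨆ i, AddMonoidHom.range ((Sigma.ι g i).app b).hom with hN
  let q : (∐ g).obj b ⟶ AddCommGrpCat.of (((∐ g).obj b) ⧸ N) :=
    AddCommGrpCat.ofHom (QuotientAddGroup.mk' N)
  have hqz : q = 0 := by
    have hc := isColimitOfPreserves ((evaluation Aᵒᵖ AddCommGrpCat.{u}).obj b)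
      (colimit.isColimit (Discrete.functor g))
    refine hc.hom_ext fun j => ?_
    ext z
    show q ((Sigma.ι g j.as).app b z) = 0
    refine (QuotientAddGroup.eq_zero_iff _).mpr ?_
    exact (le_iSup (fun i => AddMonoidHom.range ((Sigma.ι g i).app b).hom) j.as) ⟨z, rfl⟩
  refine (AddSubgroup.eq_top_iff' N).mpr fun x => ?_
  have hx : q x = 0 := by rw [hqz]; rfl
  exact (QuotientAddGroup.eq_zero_iff _).mp hx

lemma coprod_additive {ι : Type u} (g : ι → PMod A) [∀ i, (g i).Additive] :
    (∐ g : PMod A).Additive where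
  map_add {X Y f f'} := by
    ext x
    let S : AddSubgroup ((∐ g : PMod A).obj X) :=
      { carrier := {z | (∐ g : PMod A).map (f + f') z =
          (∐ g : PMod A).map f z + (∐ g : PMod A).map f' z}
        add_mem' := fun {u v} hu hv => by
          simp only [Set.mem_setOf_eq, map_add] at *
          rw [hu, hv]; abel
        zero_mem' := by simp only [Set.mem_setOf_eq, map_zero, add_zero]
        neg_mem' := fun {u} hu => by
          simp only [Set.mem_setOf_eq, map_neg] at *
          rw [hu]; abel }
    have hS : x ∈ S := by
      have hle : (⨆ i, AddMonoidHom.range ((Sigma.ι g i).app X).hom) ≤ S := by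
        refine iSup_le fun i => ?_
        rintro _ ⟨z, rfl⟩
        have n1 : (∐ g : PMod A).map (f + f') ((Sigma.ι g i).app X z) =
            (Sigma.ι g i).app Y ((g i).map (f + f') z) :=
          (ConcreteCategory.congr_hom ((Sigma.ι g i).naturality (f + f')) z).symm
        have n2 : (∐ g : PMod A).map f ((Sigma.ι g i).app X z) =
            (Sigma.ι g i).app Y ((g i).map f z) :=
          (ConcreteCategory.congr_hom ((Sigma.ι g i).naturality f) z).symm
        have n3 : (∐ g : PMod A).map f' ((Sigma.ι g i).app X z) =
            (Sigma.ι g i).app Y ((g i).map f' z) :=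
          (ConcreteCategory.congr_hom ((Sigma.ι g i).naturality f') z).symm
        show (∐ g : PMod A).map (f + f') ((Sigma.ι g i).app X z) = _
        rw [n1, n2, n3, Functor.map_add]
        show (Sigma.ι g i).app Y ((g i).map f z + (g i).map f' z) = _
        rw [map_add]
      exact hle (by rw [jg g X]; trivial)
    exact hS

lemma Hmap_app {b b' : A} (r : b ⟶ b') {c : Aᵒᵖ} (s : (Hrep A b).obj c) :
    (Hmap A r).app c s = (s : unop c ⟶ b) ≫ r := rfl

lemma inSub_iff_factors {a' a : A} (R : Subobject (Hrep A a)) (r : a' ⟶ a) :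
    inSub A R (toH A r) ↔ R.Factors (Hmap A r) := by
  constructor
  · rintro ⟨y, hy⟩
    letI : ((R : PMod A)).Additive := additive_of_mono R.arrow
    refine factors_intro _ (elt y) _ ?_
    ext c s
    show R.arrow.app c ((R : PMod A).map (s : unop c ⟶ a').op y) = (s : unop c ⟶ a') ≫ r
    have hn : R.arrow.app c ((R : PMod A).map (s : unop c ⟶ a').op y) =
        (Hrep A a).map (s : unop c ⟶ a').op (R.arrow.app (op a') y) :=
      ConcreteCategory.congr_hom (R.arrow.naturality (s : unop c ⟶ a').op) y
    rw [hn, hy]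
    rfl
  · intro h
    refine ⟨(R.factorThru (Hmap A r) h).app (op a') (toH A (𝟙 a')), ?_⟩
    have := ConcreteCategory.congr_hom
      (NatTrans.congr_app (Subobject.factorThru_arrow _ _ h) (op a')) (toH A (𝟙 a'))
    rw [show (R.factorThru (Hmap A r) h ≫ R.arrow).app (op a') (toH A (𝟙 a')) =
      R.arrow.app (op a') ((R.factorThru (Hmap A r) h).app (op a') (toH A (𝟙 a'))) from rfl]
      at this
    rw [this]
    show 𝟙 a' ≫ r = r
    simp

lemma eq_Hmap_comp {T : PMod A} {b a0 : A} (φ : Hrep A b ⟶ T) (π : Hrep A a0 ⟶ T)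
    (y : b ⟶ a0) (hy : π.app (op b) (toH A y) = φ.app (op b) (toH A (𝟙 b))) :
    φ = Hmap A y ≫ π := by
  ext c s
  show φ.app c s = π.app c ((s : unop c ⟶ b) ≫ y)
  have hn : π.app c ((Hrep A a0).map (s : unop c ⟶ b).op (toH A y)) =
      T.map (s : unop c ⟶ b).op (π.app (op b) (toH A y)) :=
    ConcreteCategory.congr_hom (π.naturality (s : unop c ⟶ b).op) (toH A y)
  have : (Hrep A a0).map (s : unop c ⟶ b).op (toH A y) = (s : unop c ⟶ b) ≫ y := rfl
  rw [← this, hn, hy, hom_app_eq φ s]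

lemma eq_elt_comp {M T : PMod A} [M.Additive] {b : A} (q : M ⟶ T) (φ : Hrep A b ⟶ T)
    (x : M.obj (op b)) (hx : q.app (op b) x = φ.app (op b) (toH A (𝟙 b))) :
    φ = elt x ≫ q := by
  ext c s
  show φ.app c s = q.app c (M.map (s : unop c ⟶ b).op x)
  have hn : q.app c (M.map (s : unop c ⟶ b).op x) =
      T.map (s : unop c ⟶ b).op (q.app (op b) x) :=
    ConcreteCategory.congr_hom (q.naturality (s : unop c ⟶ b).op) x
  rw [hn, hx, hom_app_eq φ s]

lemma elt_comp {M T : PMod A} [M.Additive] [T.Additive] {b : A} (q : M ⟶ T)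
    (x : M.obj (op b)) : elt (q.app (op b) x) = elt x ≫ q := by
  refine eq_elt_comp q _ x ?_
  show q.app (op b) x = T.map (toH A (𝟙 b) : b ⟶ b).op (q.app (op b) x)
  rw [show (toH A (𝟙 b) : b ⟶ b) = 𝟙 b from rfl, op_id, T.map_id]
  rfl

lemma elt_add {M : PMod A} [M.Additive] {b : A} (x y : M.obj (op b)) :
    elt (x + y) = elt x + elt y := by
  ext c s
  show M.map (s : unop c ⟶ b).op (x + y) = _
  rw [map_add]
  rfl

lemma elt_neg {M : PMod A} [M.Additive] {b : A} (x : M.obj (op b)) :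
    elt (-x) = -elt x := by
  ext c s
  show M.map (s : unop c ⟶ b).op (-x) = _
  rw [map_neg]
  rfl

lemma elt_zero {M : PMod A} [M.Additive] {b : A} :
    elt (0 : M.obj (op b)) = 0 := by
  ext c s
  show M.map (s : unop c ⟶ b).op 0 = _
  rw [map_zero]
  rfl

end infra

section mainlemmas
variable {A}
variable (G : LinearGT A)

lemma sieve_up {a : A} {S R : Subobject (Hrep A a)} (hle : S ≤ R) (hS : S ∈ G.sieves a) :
    R ∈ G.sieves a := by
  refine G.glue R S hS fun a' r hr => ?_
  have hf : R.Factors (Hmap A r) :=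
    Subobject.factors_of_le _ hle ((inSub_iff_factors S r).mp hr)
  rw [pullback_eq_top _ _ hf]
  exact G.id_mem a'

lemma sieve_inf {a : A} {R R' : Subobject (Hrep A a)} (h : R ∈ G.sieves a)
    (h' : R' ∈ G.sieves a) : R ⊓ R' ∈ G.sieves a := by
  refine G.glue (R ⊓ R') R' h' fun a' r hr => ?_
  rw [pullback_inf, pullback_eq_top (Hmap A r) R' ((inSub_iff_factors R' r).mp hr),
    inf_top_eq]
  exact G.pullback_mem r R h

lemma P_cokernel {a0 : A} (R : Subobject (Hrep A a0)) (hR : R ∈ G.sieves a0) {b : A}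
    (φ : Hrep A b ⟶ cokernel R.arrow) : kernelSubobject φ ∈ G.sieves b := by
  obtain ⟨y, hy⟩ := (AddCommGrpCat.epi_iff_surjective ((cokernel.π R.arrow).app (op b))).1
    inferInstance (φ.app (op b) (toH A (𝟙 b)))
  have hφ : φ = Hmap A (y : b ⟶ a0) ≫ cokernel.π R.arrow := eq_Hmap_comp φ _ _ hy
  rw [hφ, ← pullback_kernel, kernel_cokernel_pi]
  exact G.pullback_mem _ R hR

lemma P_epi_image {ι : Type u} (g : ι → PMod A) [∀ i, (g i).Additive]
    (hg : ∀ (i : ι) (b : A) (ψ : Hrep A b ⟶ g i), kernelSubobject ψ ∈ G.sieves b)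
    {T : PMod A} (p : (∐ g) ⟶ T) (hp : Epi p) {b : A} (φ : Hrep A b ⟶ T) :
    kernelSubobject φ ∈ G.sieves b := by
  letI := hp
  letI : (∐ g : PMod A).Additive := coprod_additive g
  obtain ⟨x, hx⟩ := (AddCommGrpCat.epi_iff_surjective (p.app (op b))).1 inferInstance
    (φ.app (op b) (toH A (𝟙 b)))
  have hφ : φ = elt x ≫ p := eq_elt_comp p φ x hx
  suffices hall : ∀ z : (∐ g : PMod A).obj (op b),
      kernelSubobject (elt z ≫ p) ∈ G.sieves b by
    rw [hφ]; exact hall x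
  intro z
  let S : AddSubgroup ((∐ g : PMod A).obj (op b)) :=
    { carrier := {z | kernelSubobject (elt z ≫ p) ∈ G.sieves b}
      zero_mem' := by
        show kernelSubobject (elt (0 : (∐ g : PMod A).obj (op b)) ≫ p) ∈ G.sieves b
        rw [elt_zero, Limits.zero_comp, kernel_zero_eq_top]
        exact G.id_mem b
      add_mem' := fun {u v} hu hv => by
        show kernelSubobject (elt (u + v) ≫ p) ∈ G.sieves b
        rw [elt_add, Preadditive.add_comp]
        exact sieve_up G (kernel_inf_le_add _ _) (sieve_inf G hu hv)
      neg_mem' := fun {u} hu => by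
        show kernelSubobject (elt (-u) ≫ p) ∈ G.sieves b
        rw [elt_neg, Preadditive.neg_comp, kernel_neg_eq]
        exact hu }
  have hle : (⨆ i, AddMonoidHom.range ((Sigma.ι g i).app (op b)).hom) ≤ S := by
    refine iSup_le fun i => ?_
    rintro _ ⟨w, rfl⟩
    show kernelSubobject (elt ((Sigma.ι g i).app (op b) w) ≫ p) ∈ G.sieves b
    rw [elt_comp (Sigma.ι g i) w, Category.assoc]
    exact sieve_up G (kernelSubobject_comp_le _ _) (hg i b (elt w))
  exact hle (by rw [jg g (op b)]; trivial)

lemma TG_P {T : PMod A} (hT : T ∈ TG A G) {b : A} (φ : Hrep A b ⟶ T) :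
    kernelSubobject φ ∈ G.sieves b := by
  obtain ⟨ι, g, hmem, p, hp⟩ := hT
  haveI : ∀ i, (g i).Additive := fun i => by
    obtain ⟨a0, R, hR, ⟨e⟩⟩ := hmem i
    letI : (cokernel R.arrow).Additive := additive_of_epi (cokernel.π R.arrow)
    exact additive_of_mono e.hom
  refine P_epi_image G g ?_ p hp φ
  intro i c ψ
  obtain ⟨a0, R, hR, ⟨e⟩⟩ := hmem i
  rw [← kernel_comp_mono ψ e.hom]
  exact P_cokernel G R hR (ψ ≫ e.hom)

lemma TG_additive {T : PMod A} (hT : T ∈ TG A G) : T.Additive := by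
  obtain ⟨ι, g, hmem, p, hp⟩ := hT
  haveI : ∀ i, (g i).Additive := fun i => by
    obtain ⟨a0, R, hR, ⟨e⟩⟩ := hmem i
    letI : (cokernel R.arrow).Additive := additive_of_epi (cokernel.π R.arrow)
    exact additive_of_mono e.hom
  letI := hp
  letI : (∐ g : PMod A).Additive := coprod_additive g
  exact additive_of_epi p

set_option maxHeartbeats 2000000 in
lemma P_TG {T : PMod A} (hTa : T.Additive)
    (h : ∀ (a : A) (φ : Hrep A a ⟶ T), kernelSubobject φ ∈ G.sieves a) :
    T ∈ TG A G := by
  letI := hTa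
  let gfun : (Σ a : A, (Hrep A a ⟶ T)) → PMod A := fun i => cokernel (kernelSubobject i.2).arrow
  let p : (∐ gfun) ⟶ T := Sigma.desc (fun i => cokernel.desc (kernelSubobject i.2).arrow i.2
    (kernelSubobject_arrow_comp i.2))
  haveI : ∀ X, Epi (p.app X) := by
    intro X
    rw [AddCommGrpCat.epi_iff_surjective]
    intro x
    set a := unop X with ha
    set φ : Hrep A a ⟶ T := elt (show T.obj (op a) from x) with hφ
    refine ⟨(Sigma.ι gfun ⟨a, φ⟩).app (op a)
      ((cokernel.π (kernelSubobject φ).arrow).app (op a) (toH A (𝟙 a))), ?_⟩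
    have h1 : Sigma.ι gfun ⟨a, φ⟩ ≫ p =
        cokernel.desc (kernelSubobject φ).arrow φ (kernelSubobject_arrow_comp φ) :=
      Sigma.ι_desc _ _
    have h2 : cokernel.π (kernelSubobject φ).arrow ≫
        cokernel.desc (kernelSubobject φ).arrow φ (kernelSubobject_arrow_comp φ) = φ :=
      cokernel.π_desc _ _ _
    show (Sigma.ι gfun ⟨a, φ⟩ ≫ p).app (op a)
      ((cokernel.π (kernelSubobject φ).arrow).app (op a) (toH A (𝟙 a))) = x
    rw [h1]
    show (cokernel.π (kernelSubobject φ).arrow ≫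
        cokernel.desc (kernelSubobject φ).arrow φ (kernelSubobject_arrow_comp φ)).app (op a)
      (toH A (𝟙 a)) = x
    rw [h2]
    show T.map (toH A (𝟙 a) : a ⟶ a).op x = x
    rw [show (toH A (𝟙 a) : a ⟶ a) = 𝟙 a from rfl, op_id, T.map_id]
    rfl
  exact ⟨_, gfun, fun i => ⟨i.1, kernelSubobject i.2, h i.1 i.2, ⟨Iso.refl _⟩⟩, p,
    NatTrans.epi_of_epi_app p⟩
end mainlemmas

theorem statement5 (G : LinearGT A) :
    (∀ T : PMod A, T.Additive →
      (T ∈ TG A G ↔ ∀ (a : A) (φ : Hrep A a ⟶ T), kernelSubobject φ ∈ G.sieves a)) ∧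
    IsHereditaryTorsionClass' A (TG A G) := by
  constructor
  · intro T hTa
    exact ⟨fun hT a φ => TG_P G hT φ, fun h => P_TG G hTa h⟩
  · refine ⟨?_, ?_, ?_, ?_⟩
    · -- quotients
      rintro X Q p hp ⟨ι, g, hm, q, hq⟩
      exact ⟨ι, g, hm, q ≫ p, by letI := hq; letI := hp; exact epi_comp q p⟩
    · -- extensions
      intro X hXa Q p hp hQ hK
      refine P_TG G hXa fun a φ => ?_
      letI := hp
      have hS : kernelSubobject (φ ≫ p) ∈ G.sieves a := TG_P G hQ (φ ≫ p)
      refine G.glue (kernelSubobject φ) _ hS fun a' r hr => ?_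
      have h0 : Hmap A r ≫ φ ≫ p = 0 := by
        have h1 := (inSub_iff_factors _ r).mp hr
        rw [kernelSubobject_factors_iff] at h1
        exact h1
      have h0' : kernel.lift p (Hmap A r ≫ φ) (by rw [Category.assoc]; exact h0) ≫
          kernel.ι p = Hmap A r ≫ φ := kernel.lift_ι _ _ _
      have hχ : kernelSubobject (kernel.lift p (Hmap A r ≫ φ)
          (by rw [Category.assoc]; exact h0)) ∈ G.sieves a' := TG_P G hK _
      rw [← kernel_comp_mono (kernel.lift p (Hmap A r ≫ φ)
        (by rw [Category.assoc]; exact h0)) (kernel.ι p), kernel_congr h0',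
        ← pullback_kernel] at hχ
      exact hχ
    · -- coproducts
      intro ι g hg
      choose κ F hF q hq using hg
      refine ⟨Σ i : ι, κ i, fun j => F j.1 j.2, fun j => hF j.1 j.2,
        Sigma.desc (fun j : Σ i : ι, κ i => Sigma.ι (F j.1) j.2 ≫ q j.1 ≫ Sigma.ι g j.1), ?_⟩
      set pp := Sigma.desc (fun j : Σ i : ι, κ i =>
        Sigma.ι (F j.1) j.2 ≫ q j.1 ≫ Sigma.ι g j.1) with hpp
      haveI : ∀ X, Epi (pp.app X) := by
        intro X
        rw [AddCommGrpCat.epi_iff_surjective]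
        have hr : ∀ i, AddMonoidHom.range ((Sigma.ι g i).app X).hom ≤
            AddMonoidHom.range (pp.app X).hom := by
          intro i
          rintro _ ⟨w, rfl⟩
          letI := hq i
          obtain ⟨v, rfl⟩ := (AddCommGrpCat.epi_iff_surjective ((q i).app X)).1 inferInstance w
          have hv : v ∈ AddSubgroup.comap ((q i ≫ Sigma.ι g i).app X).hom
              (AddMonoidHom.range (pp.app X).hom) := by
            have hle : (⨆ k, AddMonoidHom.range ((Sigma.ι (F i) k).app X).hom) ≤
                AddSubgroup.comap ((q i ≫ Sigma.ι g i).app X).hom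
                  (AddMonoidHom.range (pp.app X).hom) := by
              refine iSup_le fun k => ?_
              rintro _ ⟨z, rfl⟩
              refine ⟨(Sigma.ι (fun j : Σ i : ι, κ i => F j.1 j.2) ⟨i, k⟩).app X z, ?_⟩
              have hc : Sigma.ι (fun j : Σ i : ι, κ i => F j.1 j.2) ⟨i, k⟩ ≫ pp =
                  Sigma.ι (F i) k ≫ q i ≫ Sigma.ι g i := by
                rw [hpp]; exact Sigma.ι_desc _ _
              show (Sigma.ι (fun j : Σ i : ι, κ i => F j.1 j.2) ⟨i, k⟩ ≫ pp).app X z = _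
              rw [hc]
              rfl
            exact hle (by rw [jg (F i) X]; trivial)
          exact hv
        intro y
        have hy : y ∈ AddMonoidHom.range (pp.app X).hom :=
          (iSup_le hr : _ ≤ AddMonoidHom.range (pp.app X).hom) (by rw [jg g X]; trivial)
        exact hy
      exact NatTrans.epi_of_epi_app pp
    · -- subobjects
      intro S X f hf hX
      letI := hf
      haveI hXa : X.Additive := TG_additive G hX
      letI : S.Additive := additive_of_mono f
      refine P_TG G inferInstance fun a φ => ?_
      rw [← kernel_comp_mono φ f]
      exact TG_P G hX (φ ≫ f)
end
end

section
/- Let A be a small preadditive category and let I be an idempotent ideal of A. Then the class T_I := {T ∈ Mod A : T(α) = 0 for all α ∈ I(a,b) and all a,b ∈ Ob(A)} is a TTF class in Mod A, i.e. it is closed under products, coproducts, submodules, quotients and extensions. -/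
open CategoryTheory CategoryTheory.Limits Opposite
noncomputable section
universe u
variable (A : Type u) [SmallCategory A] [Preadditive A]

/-- A two-sided ideal of the preadditive category `A`. -/
structure CatIdeal : Type u where
  carrier : ∀ a b : A, AddSubgroup (a ⟶ b)
  comp_mem_left : ∀ {a b c : A} (f : a ⟶ b) (g : b ⟶ c), f ∈ carrier a b → f ≫ g ∈ carrier a c
  comp_mem_right : ∀ {a b c : A} (f : a ⟶ b) (g : b ⟶ c), g ∈ carrier b c → f ≫ g ∈ carrier a c

/-- The product of two ideals: finite sums of composites. -/
def idealMul (I J : CatIdeal A) : ∀ a b : A, AddSubgroup (a ⟶ b) := fun a b =>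
  AddSubgroup.closure
    {u | ∃ (c : A) (ψ : a ⟶ c) (φ : c ⟶ b), ψ ∈ J.carrier a c ∧ φ ∈ I.carrier c b ∧ u = ψ ≫ φ}

def CatIdeal.IsIdempotent (I : CatIdeal A) : Prop :=
  ∀ a b : A, idealMul A I I a b = I.carrier a b

def TI (I : CatIdeal A) : Set (PMod A) :=
  {M | M.Additive ∧ ∀ (a b : A) (α : a ⟶ b), α ∈ I.carrier a b → M.map α.op = 0}

section Aux

variable {A}

/-- Closure under products. -/
lemma prod_mem_TI_aux (I : CatIdeal A) (ι : Type u) (g : ι → PMod A)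
    (hg : ∀ i, g i ∈ TI A I) : (∏ᶜ g) ∈ TI A I := by
  constructor
  · constructor
    intro X Y f f'
    apply limit_obj_ext
    intro j
    haveI : (g j.as).Additive := (hg j.as).1
    have n : ∀ (h : X ⟶ Y), (∏ᶜ g).map h ≫ (limit.π (Discrete.functor g) j).app Y =
        (limit.π (Discrete.functor g) j).app X ≫ (g j.as).map h := fun h =>
      (limit.π (Discrete.functor g) j).naturality h
    rw [n, Preadditive.add_comp, n, n, Functor.map_add, Preadditive.comp_add]
  · intro a b α hα
    apply limit_obj_ext
    intro j
    have n := (limit.π (Discrete.functor g) j).naturality α.op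
    rw [n, show ((Discrete.functor g).obj j).map α.op = 0 from (hg j.as).2 a b α hα,
      Limits.comp_zero, Limits.zero_comp]

/-- Closure under coproducts. -/
lemma coprod_mem_TI_aux (I : CatIdeal A) (ι : Type u) (g : ι → PMod A)
    (hg : ∀ i, g i ∈ TI A I) : (∐ g) ∈ TI A I := by
  constructor
  · constructor
    intro X Y f f'
    apply colimit_obj_ext
    intro j
    haveI : (g j.as).Additive := (hg j.as).1
    have n : ∀ (h : X ⟶ Y), (colimit.ι (Discrete.functor g) j).app X ≫ (∐ g).map h =
        (g j.as).map h ≫ (colimit.ι (Discrete.functor g) j).app Y := fun h =>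
      ((colimit.ι (Discrete.functor g) j).naturality h).symm
    rw [n, Preadditive.comp_add, n, n, Functor.map_add, Preadditive.add_comp]
  · intro a b α hα
    apply colimit_obj_ext
    intro j
    have n := ((colimit.ι (Discrete.functor g) j).naturality α.op).symm
    rw [n, show ((Discrete.functor g).obj j).map α.op = 0 from (hg j.as).2 a b α hα,
      Limits.comp_zero, Limits.zero_comp]

/-- Closure under submodules. -/
lemma sub_mem_TI_aux (I : CatIdeal A) (S X : PMod A) (f : S ⟶ X) (hf : Mono f)
    (hX : X ∈ TI A I) : S ∈ TI A I := by
  haveI := hf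
  haveI : X.Additive := hX.1
  constructor
  · constructor
    intro Y Z u u'
    haveI : Mono (f.app Z) := inferInstance
    rw [← cancel_mono (f.app Z), f.naturality, Preadditive.add_comp, f.naturality, f.naturality,
      Functor.map_add, Preadditive.comp_add]
  · intro a b α hα
    haveI : Mono (f.app (op a)) := inferInstance
    rw [← cancel_mono (f.app (op a)), f.naturality, hX.2 a b α hα, Limits.comp_zero,
      Limits.zero_comp]

/-- Closure under quotients. -/
lemma quot_mem_TI_aux (I : CatIdeal A) (X Q : PMod A) (p : X ⟶ Q) (hp : Epi p)
    (hX : X ∈ TI A I) : Q ∈ TI A I := by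
  haveI := hp
  haveI : X.Additive := hX.1
  constructor
  · constructor
    intro Y Z u u'
    haveI : Epi (p.app Y) := inferInstance
    rw [← cancel_epi (p.app Y), ← p.naturality, Preadditive.comp_add, ← p.naturality,
      ← p.naturality, Functor.map_add, Preadditive.add_comp]
  · intro a b α hα
    haveI : Epi (p.app (op b)) := inferInstance
    rw [← cancel_epi (p.app (op b)), ← p.naturality, hX.2 a b α hα, Limits.comp_zero,
      Limits.zero_comp]

/-- Closure under extensions. -/
lemma ext_mem_TI_aux (I : CatIdeal A) (hI : I.IsIdempotent) (X : PMod A) (hXadd : X.Additive)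
    (Q : PMod A) (p : X ⟶ Q) (hp : Epi p) (hQ : Q ∈ TI A I) (hK : kernel p ∈ TI A I) :
    X ∈ TI A I := by
  haveI := hXadd
  refine ⟨hXadd, fun a b α hα => ?_⟩
  -- the key step: composites from the ideal vanish on `X`
  have key : ∀ (c : A) (ψ : a ⟶ c) (φ : c ⟶ b), ψ ∈ I.carrier a c → φ ∈ I.carrier c b →
      X.map (ψ ≫ φ).op = 0 := by
    intro c ψ φ hψ hφ
    -- `X.map φ.op` composed with `p.app (op c)` vanishes
    have h0 : X.map φ.op ≫ p.app (op c) = 0 := by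
      rw [p.naturality, hQ.2 c b φ hφ, Limits.comp_zero]
    -- factor `X.map φ.op` through the kernel of `p` evaluated at `op c`
    let G := (evaluation Aᵒᵖ AddCommGrpCat.{u}).obj (op c)
    have hGp : G.map p = p.app (op c) := rfl
    haveI : HasKernel (G.map p) := by rw [hGp]; infer_instance
    let e : X.obj (op b) ⟶ (kernel p).obj (op c) :=
      (kernel.lift (G.map p) (X.map φ.op) (by rw [hGp]; exact h0)) ≫
        inv (kernelComparison p G)
    have hfac : X.map φ.op = e ≫ (kernel.ι p).app (op c) := by
      have h1 : kernelComparison p G ≫ kernel.ι (G.map p) = G.map (kernel.ι p) :=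
        kernelComparison_comp_ι p G
      have : e ≫ (kernel.ι p).app (op c) =
          kernel.lift (G.map p) (X.map φ.op) (by rw [hGp]; exact h0) ≫
            (inv (kernelComparison p G) ≫ kernelComparison p G) ≫ kernel.ι (G.map p) := by
        simp only [e, Category.assoc, h1]
        rfl
      rw [this, IsIso.inv_hom_id, Category.id_comp, kernel.lift_ι]
    have hψ0 : (kernel.ι p).app (op c) ≫ X.map ψ.op = 0 := by
      rw [← (kernel.ι p).naturality, hK.2 a c ψ hψ, Limits.zero_comp]
    calc X.map (ψ ≫ φ).op = X.map (φ.op ≫ ψ.op) := rfl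
      _ = X.map φ.op ≫ X.map ψ.op := X.map_comp _ _
      _ = e ≫ (kernel.ι p).app (op c) ≫ X.map ψ.op := by rw [hfac, Category.assoc]
      _ = 0 := by rw [hψ0, Limits.comp_zero]
  -- now use idempotency and closure induction
  have hα' : α ∈ idealMul A I I a b := by rw [hI a b]; exact hα
  refine AddSubgroup.closure_induction
    (p := fun (γ : a ⟶ b) (_ : γ ∈ idealMul A I I a b) => X.map γ.op = 0)
    ?_ ?_ ?_ ?_ hα'
  · rintro x ⟨c, ψ, φ, hψ, hφ, rfl⟩
    exact key c ψ φ hψ hφ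
  · show X.map (0 : a ⟶ b).op = 0
    have : ((0 : a ⟶ b)).op = (0 : op b ⟶ op a) := rfl
    rw [this, X.map_zero]
  · intro x y _ _ hx hy
    have : ((x + y : a ⟶ b)).op = x.op + y.op := rfl
    rw [this, X.map_add, hx, hy, add_zero]
  · intro x _ hx
    have : ((-x : a ⟶ b)).op = -(x.op) := rfl
    rw [this, X.map_neg, hx, neg_zero]

end Aux

theorem statement10 (I : CatIdeal A) (hI : I.IsIdempotent) :
    -- closed under products
    (∀ (ι : Type u) (g : ι → PMod A), (∀ i, g i ∈ TI A I) → (∏ᶜ g) ∈ TI A I) ∧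
    -- closed under coproducts
    (∀ (ι : Type u) (g : ι → PMod A), (∀ i, g i ∈ TI A I) → (∐ g) ∈ TI A I) ∧
    -- closed under submodules
    (∀ (S X : PMod A) (f : S ⟶ X), Mono f → X ∈ TI A I → S ∈ TI A I) ∧
    -- closed under quotients
    (∀ (X Q : PMod A) (p : X ⟶ Q), Epi p → X ∈ TI A I → Q ∈ TI A I) ∧
    -- closed under extensions
    (∀ X : PMod A, X.Additive → ∀ (Q : PMod A) (p : X ⟶ Q), Epi p → Q ∈ TI A I →
      kernel p ∈ TI A I → X ∈ TI A I) := by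
  exact ⟨fun ι g hg => prod_mem_TI_aux I ι g hg,
    fun ι g hg => coprod_mem_TI_aux I ι g hg,
    fun S X f hf hX => sub_mem_TI_aux I S X f hf hX,
    fun X Q p hp hX => quot_mem_TI_aux I X Q p hp hX,
    fun X hXadd Q p hp hQ hK => ext_mem_TI_aux I hI X hXadd Q p hp hQ hK⟩
end
end
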